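/- In the binary reflected Gray code, if two consecutive codewords rg_B(x) and rg_B(x+1) differ at position m < B, then bits m+1 through B of both codewords equal the string 1 0^{B-m-1}. -/

import Mathlib

/-- The `B`-bit binary reflected Gray code (bit `0` most significant). -/
def rg : (B : ℕ) → ℕ → (Fin B → Bool)
  | 0, _ => fun i => i.elim0
  | B + 1, x =>
      Fin.cons (decide (2 ^ B ≤ x)) (rg B (if x < 2 ^ B then x else 2 ^ (B + 1) - 1 - x))

lemma rg_zero : ∀ (B : ℕ) (i : Fin B), rg B 0 i = false := by
  intro B
  induction B with
  | zero => intro i; exact i.elim0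
  | succ B ih =>
    intro i
    have hp : 0 < 2 ^ B := Nat.pow_pos (n := B) (by norm_num)
    refine Fin.cases ?_ ?_ i
    · simp only [rg, Fin.cons_zero]
      exact decide_eq_false (Nat.not_le.mpr hp)
    · intro j
      simp only [rg, Fin.cons_succ]
      rw [if_pos hp]
      exact ih j

lemma rg_top : ∀ (B : ℕ), 0 < B → ∀ i : Fin B, rg B (2 ^ B - 1) i = decide (i.val = 0) := by
  rintro (_ | B) hB i
  · exact absurd hB (by norm_num)
  · have hp : 0 < 2 ^ B := Nat.pow_pos (n := B) (by norm_num)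
    have h1 : ¬ (2 ^ (B + 1) - 1 < 2 ^ B) := by
      have : 2 ^ (B+1) = 2 * 2 ^ B := by ring
      omega
    refine Fin.cases ?_ ?_ i
    · simp only [rg, Fin.cons_zero]
      simp [Nat.not_lt.mp h1]
    · intro j
      simp only [rg, Fin.cons_succ, if_neg h1]
      rw [Nat.sub_self, rg_zero]
      simp

theorem rg_suffix_after_diff (B : ℕ) (x : ℕ) (hx : x + 1 < 2 ^ B) (m : Fin B)
    (hm : m.val + 1 < B) (hdiff : rg B x m ≠ rg B (x + 1) m) :
    ∀ j : Fin B, m < j →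
      rg B x j = decide (j.val = m.val + 1) ∧
      rg B (x + 1) j = decide (j.val = m.val + 1) := by
  induction B generalizing x with
  | zero => exact m.elim0
  | succ B ih =>
    have hp : 0 < 2 ^ B := Nat.pow_pos (n := B) (by norm_num)
    have h2 : (2:ℕ) ^ (B+1) = 2 * 2 ^ B := by ring
    rcases Nat.lt_trichotomy (x + 1) (2 ^ B) with h1 | h1 | h1
    · -- both in first half
      have hx1 : x < 2 ^ B := by omega
      induction m using Fin.cases with
      | zero =>
        exfalso
        apply hdiff
        simp only [rg, Fin.cons_zero, decide_eq_decide]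
        omega
      | succ i =>
        simp only [rg, Fin.cons_succ, if_pos hx1, if_pos h1] at hdiff
        rw [Fin.val_succ] at hm
        have key := ih x h1 i (by omega) hdiff
        intro j hj
        induction j using Fin.cases with
        | zero => exact absurd hj (by simp [Fin.lt_def])
        | succ j' =>
          have hij : i < j' := Fin.succ_lt_succ_iff.mp hj
          have hk := key j' hij
          simp only [rg, Fin.cons_succ, if_pos hx1, if_pos h1]
          constructor
          · rw [hk.1]; simp only [Fin.val_succ, decide_eq_decide]; omega
          · rw [hk.2]; simp only [Fin.val_succ, decide_eq_decide]; omega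
    · -- boundary case: x = 2^B - 1
      have hnl : ¬ (x + 1 < 2 ^ B) := by omega
      have htail : 2 ^ (B + 1) - 1 - (x + 1) = 2 ^ B - 1 := by omega
      induction m using Fin.cases with
      | zero =>
        have hB : 0 < B := by simpa using hm
        intro j hj
        induction j using Fin.cases with
        | zero => exact absurd hj (by simp [Fin.lt_def])
        | succ j' =>
          simp only [rg, Fin.cons_succ]
          rw [if_pos (by omega : x < 2 ^ B), if_neg hnl, htail,
            (by omega : x = 2 ^ B - 1)]
          simp only [rg_top B hB]
          simp [Fin.val_succ]
      | succ i =>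
        exfalso
        apply hdiff
        simp only [rg, Fin.cons_succ]
        rw [if_pos (by omega : x < 2 ^ B), if_neg hnl, htail,
          (by omega : x = 2 ^ B - 1)]
    · -- both in second half
      have hnl1 : ¬ (x < 2 ^ B) := by omega
      have hnl2 : ¬ (x + 1 < 2 ^ B) := by omega
      set y := 2 ^ (B + 1) - 1 - (x + 1) with hy
      have hy1 : 2 ^ (B + 1) - 1 - x = y + 1 := by omega
      have hylt : y + 1 < 2 ^ B := by omega
      induction m using Fin.cases with
      | zero =>
        exfalso
        apply hdiff
        simp only [rg, Fin.cons_zero, decide_eq_decide]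
        omega
      | succ i =>
        simp only [rg, Fin.cons_succ, if_neg hnl1, if_neg hnl2, hy1] at hdiff
        rw [Fin.val_succ] at hm
        have key := ih y hylt i (by omega) (Ne.symm hdiff)
        intro j hj
        induction j using Fin.cases with
        | zero => exact absurd hj (by simp [Fin.lt_def])
        | succ j' =>
          have hij : i < j' := Fin.succ_lt_succ_iff.mp hj
          have hk := key j' hij
          simp only [rg, Fin.cons_succ, if_neg hnl1, if_neg hnl2, hy1]
          constructor
          · rw [hk.2]; simp only [Fin.val_succ, decide_eq_decide]; omega
          · rw [hk.1]; simp only [Fin.val_succ, decide_eq_decide]; omega
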